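/- arXiv:1311.2563 — 3 statements merged into one kernel-verified Lean document; each statement's English description precedes it below -/
import Mathlib

section
/- Let G be a connected finite simple graph, k a positive integer, S ⊆ V(G), let 𝒞 be the family of all inclusion-wise maximal chips, and let A = (⋂_{C ∈ 𝒞} (V(G) ∖ N_G[C])) ∪ ⋃_{C ∈ 𝒞} N_G(C), with A = V(G) when 𝒞 = ∅. Then for every connected component D of G − A it holds that |N_G(D)| ≤ 3k·(3k·4^{3k}+1). -/
open SimpleGraph

variable {V : Type*}

/-- The open neighbourhood `N_G(C)` of a vertex set `C`:
vertices outside `C` with a neighbour in `C`. -/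
def setNbhd (G : SimpleGraph V) (C : Set V) : Set V :=
  {v | v ∉ C ∧ ∃ u ∈ C, G.Adj u v}

/-- The closed neighbourhood `N_G[C] = C ∪ N_G(C)`. -/
def closedNbhd (G : SimpleGraph V) (C : Set V) : Set V :=
  C ∪ setNbhd G C

/-- `W` is `(q,k)`-unbreakable in the induced subgraph `G[U]`:
every separation `(A,B)` of `G[U]` of order at most `k` has
`|(A∖B) ∩ W| ≤ q` or `|(B∖A) ∩ W| ≤ q`. -/
def UnbreakableIn (G : SimpleGraph V) (U W : Set V) (q k : ℕ) : Prop :=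
  ∀ A B : Set V, A ∪ B = U →
    (∀ a ∈ A \ B, ∀ b ∈ B \ A, ¬ G.Adj a b) →
    (A ∩ B).ncard ≤ k →
    ((A \ B) ∩ W).ncard ≤ q ∨ ((B \ A) ∩ W).ncard ≤ q

/-- `W` is `(q,k)`-unbreakable in `G`. -/
def Unbreakable (G : SimpleGraph V) (W : Set V) (q k : ℕ) : Prop :=
  UnbreakableIn G Set.univ W q k

/-- `x` and `y` lie in the same connected component of `G − W`. -/
def ReachAvoid (G : SimpleGraph V) (W : Set V) (x y : V) : Prop :=
  ∃ (hx : x ∈ Wᶜ) (hy : y ∈ Wᶜ), (G.induce Wᶜ).Reachable ⟨x, hx⟩ ⟨y, hy⟩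

/-- `W` is an `X–Y` separator: no connected component of `G − W` contains
a vertex of `X∖W` and a vertex of `Y∖W`. -/
def IsSeparator (G : SimpleGraph V) (X Y W : Set V) : Prop :=
  ∀ x ∈ X \ W, ∀ y ∈ Y \ W, ¬ ReachAvoid G W x y

/-- `R_{G−W}(X∖W)`: the set of vertices reachable from `X∖W` in `G − W`. -/
def reachSet (G : SimpleGraph V) (W X : Set V) : Set V :=
  {y | ∃ x ∈ X \ W, ReachAvoid G W x y}

/-- `W` is an important `X–Y` separator. -/
def IsImportantSeparator (G : SimpleGraph V) (X Y W : Set V) : Prop :=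
  IsSeparator G X Y W ∧
  (∀ W' ⊆ W, IsSeparator G X Y W' → W' = W) ∧
  ∀ W' : Set V, IsSeparator G X Y W' → W'.ncard ≤ W.ncard →
    ¬ reachSet G W X ⊂ reachSet G W' X

/-- A chip (w.r.t. `G`, `k` and `S`): `G[C]` is connected, `|N_G(C)| ≤ 3k`,
and `N_G(C)` is an important `C–S` separator. -/
def IsChip (G : SimpleGraph V) (k : ℕ) (S C : Set V) : Prop :=
  (G.induce C).Connected ∧ (setNbhd G C).ncard ≤ 3 * k ∧
  IsImportantSeparator G C S (setNbhd G C)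

/-- The family of all inclusion-wise maximal chips. -/
def maximalChips (G : SimpleGraph V) (k : ℕ) (S : Set V) : Set (Set V) :=
  {C | IsChip G k S C ∧ ∀ C', IsChip G k S C' → C ⊆ C' → C' = C}

/-- Two vertex sets touch: they intersect or some edge joins them. -/
def Touches (G : SimpleGraph V) (C₁ C₂ : Set V) : Prop :=
  (C₁ ∩ C₂).Nonempty ∨ ∃ u ∈ C₁, ∃ v ∈ C₂, G.Adj u v

/-- `D` is a connected component of `G − A`: a maximal set disjoint from `A`
inducing a connected subgraph. -/
def IsCompOf (G : SimpleGraph V) (A D : Set V) : Prop :=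
  D ⊆ Aᶜ ∧ (G.induce D).Connected ∧
  ∀ D', D ⊆ D' → D' ⊆ Aᶜ → (G.induce D').Connected → D' = D

/-- The set `A = (⋂_{C ∈ 𝒞} V(G) ∖ N[C]) ∪ ⋃_{C ∈ 𝒞} N(C)` built from the
maximal chips (equals `V(G)` when there are no chips). -/
def chipBag (G : SimpleGraph V) (k : ℕ) (S : Set V) : Set V :=
  (⋂ C ∈ maximalChips G k S, (closedNbhd G C)ᶜ) ∪
    ⋃ C ∈ maximalChips G k S, setNbhd G C

/-- `η(k) = 3k·(3k·4^{3k}+1)`. -/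
def etaB (k : ℕ) : ℕ := 3 * k * (3 * k * 4 ^ (3 * k) + 1)

/-- `τ(k) = (3k)²·8^{3k} + 2k`. -/
def tauB (k : ℕ) : ℕ := (3 * k) ^ 2 * 8 ^ (3 * k) + 2 * k

/-- `τ′(k) = τ + (C(τ+k,2)·k + k)·k·η`. -/
def tauB' (k : ℕ) : ℕ :=
  tauB k + ((tauB k + k).choose 2 * k + k) * k * etaB k

/-- The tree graph determined by a parent function. -/
def parentGraph {T : Type*} (parent : T → T) : SimpleGraph T where
  Adj t s := t ≠ s ∧ (parent t = s ∨ parent s = t)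
  symm := ⟨fun t s h => ⟨h.1.symm, h.2.symm⟩⟩
  loopless := ⟨fun t h => h.1 rfl⟩

/-- The descendants of `t` (including `t` itself). -/
def descSet {T : Type*} (parent : T → T) (t : T) : Set T :=
  {u | ∃ n : ℕ, parent^[n] u = t}

/-- `γ(t) = ⋃_{u ⪯ t} β(u)`. -/
def gammaSet {T : Type*} (parent : T → T) (β : T → Set V) (t : T) : Set V :=
  ⋃ u ∈ descSet parent t, β u

/-- `σ(t) = ∅` for the root, `β(t) ∩ β(parent t)` otherwise. -/
def sigmaSet {T : Type*} [DecidableEq T] (root : T) (parent : T → T)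
    (β : T → Set V) (t : T) : Set V :=
  if t = root then ∅ else β t ∩ β (parent t)

/-- `(T,β)` (a rooted tree given by `root` and `parent`, with bags `β`)
is a tree decomposition of `G`. -/
structure IsTreeDecomp (G : SimpleGraph V) {T : Type*} (root : T) (parent : T → T)
    (β : T → Set V) : Prop where
  parent_root : parent root = root
  reaches_root : ∀ t : T, ∃ n : ℕ, parent^[n] t = root
  bags_connected : ∀ v : V, ((parentGraph parent).induce {t | v ∈ β t}).Connected
  edge_in_bag : ∀ u v : V, G.Adj u v → ∃ t : T, u ∈ β t ∧ v ∈ β t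

-- ### chains
def chainRel (G : SimpleGraph V) (T : Set V) (a b : V) : Prop :=
  a ∈ T ∧ b ∈ T ∧ G.Adj a b

lemma chainRel_symm (G : SimpleGraph V) (T : Set V) : Symmetric (chainRel G T) :=
  fun _ _ h => ⟨h.2.1, h.1, h.2.2.symm⟩

lemma chainRel_mono (G : SimpleGraph V) {T T' : Set V} (hT : T ⊆ T') :
    ∀ a b, chainRel G T a b → chainRel G T' a b :=
  fun _ _ h => ⟨hT h.1, hT h.2.1, h.2.2⟩

lemma walk_chain (G : SimpleGraph V) {T : Set V} :
    ∀ {a b : T}, (G.induce T).Walk a b →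
      Relation.ReflTransGen (chainRel G T) a.1 b.1 := by
  intro a b p
  induction p with
  | nil => exact Relation.ReflTransGen.refl
  | @cons u v w h p ih =>
      refine Relation.ReflTransGen.head ⟨u.2, v.2, ?_⟩ ih
      simpa [SimpleGraph.comap] using h

lemma chain_reach (G : SimpleGraph V) {T : Set V} {x y : V}
    (h : Relation.ReflTransGen (chainRel G T) x y) :
    ∀ (hx : x ∈ T) (hy : y ∈ T), (G.induce T).Reachable ⟨x, hx⟩ ⟨y, hy⟩ := by
  induction h with
  | refl => intro hx hy; rfl
  | @tail b c hchain hstep ih =>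
      intro hx hy
      exact (ih hx hstep.1).trans
        (SimpleGraph.Adj.reachable (by simpa [SimpleGraph.comap] using hstep.2.2))

/-- `Conn G A x y`: x and y connected avoiding `A`. -/
def Conn (G : SimpleGraph V) (A : Set V) (x y : V) : Prop :=
  x ∉ A ∧ y ∉ A ∧ Relation.ReflTransGen (chainRel G Aᶜ) x y

lemma reachAvoid_iff (G : SimpleGraph V) (A : Set V) (x y : V) :
    ReachAvoid G A x y ↔ Conn G A x y := by
  constructor
  · rintro ⟨hx, hy, hr⟩
    exact ⟨hx, hy, hr.elim fun p => walk_chain G p⟩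
  · rintro ⟨hx, hy, hr⟩
    exact ⟨hx, hy, chain_reach G hr hx hy⟩

namespace Conn

variable {G : SimpleGraph V} {A B : Set V} {x y z : V}

lemma refl (hx : x ∉ A) : Conn G A x x := ⟨hx, hx, Relation.ReflTransGen.refl⟩

lemma symm (h : Conn G A x y) : Conn G A y x :=
  ⟨h.2.1, h.1, haveI : Std.Symm (chainRel G Aᶜ) := ⟨fun a b hab => chainRel_symm G Aᶜ hab⟩
    Std.Symm.symm _ _ h.2.2⟩

lemma trans (h : Conn G A x y) (h' : Conn G A y z) : Conn G A x z :=
  ⟨h.1, h'.2.1, h.2.2.trans h'.2.2⟩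

lemma adj (hx : x ∉ A) (hy : y ∉ A) (h : G.Adj x y) : Conn G A x y :=
  ⟨hx, hy, Relation.ReflTransGen.single ⟨hx, hy, h⟩⟩

lemma mono (hBA : B ⊆ A) (h : Conn G A x y) : Conn G B x y :=
  ⟨fun hc => h.1 (hBA hc), fun hc => h.2.1 (hBA hc),
    Relation.ReflTransGen.mono (chainRel_mono G (Set.compl_subset_compl.2 hBA)) _ _ h.2.2⟩

lemma tail (h : Conn G A x y) (hz : z ∉ A) (hadj : G.Adj y z) : Conn G A x z :=
  h.trans (adj h.2.1 hz hadj)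

/-- confinement: if `R` is closed under steps avoiding `A` then a chain from
a vertex of `R` stays in `R`. -/
lemma confine {R : Set V} (h : Conn G A x y) (hx : x ∈ R)
    (hcl : ∀ a ∈ R, ∀ b, G.Adj a b → b ∉ A → b ∈ R) : y ∈ R := by
  obtain ⟨-, -, hr⟩ := h
  induction hr with
  | refl => exact hx
  | @tail b c hchain hstep ih => exact hcl b ih c hstep.2.2 hstep.2.1

end Conn

lemma conn_of_chain {G : SimpleGraph V} {R A : Set V} {x y : V} (hRA : ∀ a ∈ R, a ∉ A)
    (hx : x ∈ R) (hy : y ∈ R) (h : Relation.ReflTransGen (chainRel G R) x y) :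
    Conn G A x y :=
  ⟨hRA _ hx, hRA _ hy, Relation.ReflTransGen.mono (fun a b hab => ⟨hRA _ hab.1, hRA _ hab.2.1, hab.2.2⟩) _ _ h⟩

section reachSet

variable {G : SimpleGraph V} {A B X X' : Set V} {x y : V}

lemma mem_reachSet : y ∈ reachSet G A X ↔ ∃ x ∈ X \ A, Conn G A x y := by
  simp [reachSet, reachAvoid_iff]

lemma reachSet_subset_compl : reachSet G A X ⊆ Aᶜ := by
  intro y hy
  obtain ⟨x, -, h⟩ := mem_reachSet.1 hy
  exact h.2.1

lemma subset_reachSet : X \ A ⊆ reachSet G A X :=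
  fun x hx => mem_reachSet.2 ⟨x, hx, Conn.refl hx.2⟩

lemma reachSet_closed (hy : y ∈ reachSet G A X) (hadj : G.Adj y x) (hx : x ∉ A) :
    x ∈ reachSet G A X := by
  obtain ⟨x₀, hx₀, h⟩ := mem_reachSet.1 hy
  exact mem_reachSet.2 ⟨x₀, hx₀, h.tail hx hadj⟩

lemma reachSet_conn (hy : y ∈ reachSet G A X) (h : Conn G A y x) :
    x ∈ reachSet G A X := by
  obtain ⟨x₀, hx₀, h₀⟩ := mem_reachSet.1 hy
  exact mem_reachSet.2 ⟨x₀, hx₀, h₀.trans h⟩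

lemma reachSet_mono_avoid (hBA : B ⊆ A) : reachSet G A X ⊆ reachSet G B X := by
  intro y hy
  obtain ⟨x, hx, h⟩ := mem_reachSet.1 hy
  exact mem_reachSet.2 ⟨x, ⟨hx.1, fun hc => hx.2 (hBA hc)⟩, h.mono hBA⟩

lemma reachSet_mono_src (hXX : X ⊆ X') : reachSet G A X ⊆ reachSet G A X' := by
  intro y hy
  obtain ⟨x, hx, h⟩ := mem_reachSet.1 hy
  exact mem_reachSet.2 ⟨x, ⟨hXX hx.1, hx.2⟩, h⟩

lemma reachSet_absorb (hXX : X ⊆ X') (habs : X' \ X ⊆ reachSet G A X) :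
    reachSet G A X' = reachSet G A X := by
  refine Set.Subset.antisymm ?_ (reachSet_mono_src hXX)
  intro y hy
  obtain ⟨x, hx, h⟩ := mem_reachSet.1 hy
  by_cases hxX : x ∈ X
  · exact mem_reachSet.2 ⟨x, ⟨hxX, hx.2⟩, h⟩
  · exact reachSet_conn (habs ⟨hx.1, hxX⟩) h

lemma setNbhd_reachSet_subset : setNbhd G (reachSet G A X) ⊆ A := by
  rintro v ⟨hv, u, hu, hadj⟩
  by_contra hvA
  exact hv (reachSet_closed hu hadj hvA)

/-- a chain witnessing membership in the reach set can be taken inside it. -/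
lemma reachSet_chain_in (hy : y ∈ reachSet G A X) :
    ∃ x ∈ X \ A, Relation.ReflTransGen (chainRel G (reachSet G A X)) x y := by
  obtain ⟨x, hx, hc⟩ := mem_reachSet.1 hy
  refine ⟨x, hx, ?_⟩
  obtain ⟨-, -, hr⟩ := hc
  have hx' : x ∈ reachSet G A X := subset_reachSet hx
  clear hy
  induction hr with
  | refl => exact Relation.ReflTransGen.refl
  | @tail b c hchain hstep ih =>
      have hb : b ∈ reachSet G A X := by
        obtain ⟨xx, hxx, hcc⟩ := mem_reachSet.1 hx'
        exact reachSet_conn hx' ⟨hx.2, hstep.1, hchain⟩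
      exact (ih).tail ⟨hb, reachSet_closed hb hstep.2.2 hstep.2.1, hstep.2.2⟩

lemma isSeparator_iff {Y W : Set V} :
    IsSeparator G X Y W ↔ ∀ x ∈ X \ W, ∀ y ∈ Y \ W, ¬ Conn G W x y := by
  unfold IsSeparator
  simp [reachAvoid_iff]

end reachSet

-- ### setNbhd submodularity
section submod

variable (G : SimpleGraph V) (R₁ R₂ : Set V)

lemma setNbhd_inter_subset : setNbhd G (R₁ ∩ R₂) ⊆ setNbhd G R₁ ∪ setNbhd G R₂ := by
  rintro v ⟨hv, u, hu, hadj⟩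
  by_cases h1 : v ∈ R₁
  · exact Or.inr ⟨fun hc => hv ⟨h1, hc⟩, u, hu.2, hadj⟩
  · exact Or.inl ⟨h1, u, hu.1, hadj⟩

lemma setNbhd_union_subset : setNbhd G (R₁ ∪ R₂) ⊆ setNbhd G R₁ ∪ setNbhd G R₂ := by
  rintro v ⟨hv, u, hu, hadj⟩
  rcases hu with hu | hu
  · exact Or.inl ⟨fun hc => hv (Or.inl hc), u, hu, hadj⟩
  · exact Or.inr ⟨fun hc => hv (Or.inr hc), u, hu, hadj⟩

lemma setNbhd_inter_inter_union_subset :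
    setNbhd G (R₁ ∩ R₂) ∩ setNbhd G (R₁ ∪ R₂) ⊆ setNbhd G R₁ ∩ setNbhd G R₂ := by
  rintro v ⟨⟨hv, u, hu, hadj⟩, ⟨hv', -⟩⟩
  exact ⟨⟨fun hc => hv' (Or.inl hc), u, hu.1, hadj⟩,
    ⟨fun hc => hv' (Or.inr hc), u, hu.2, hadj⟩⟩

lemma setNbhd_disjoint : setNbhd G R₁ ∩ R₁ = ∅ := by
  ext v; simp only [Set.mem_inter_iff, Set.mem_empty_iff_false, iff_false]
  rintro ⟨⟨hv, -⟩, hv'⟩; exact hv hv'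

end submod

section card
variable [Fintype V] (G : SimpleGraph V)

lemma submod_card (R₁ R₂ Z : Set V) :
    (setNbhd G (R₁ ∩ R₂) \ Z).ncard + (setNbhd G (R₁ ∪ R₂) \ Z).ncard ≤
      (setNbhd G R₁ \ Z).ncard + (setNbhd G R₂ \ Z).ncard := by
  classical
  set A := setNbhd G (R₁ ∩ R₂) \ Z
  set B := setNbhd G (R₁ ∪ R₂) \ Z
  set N₁ := setNbhd G R₁ \ Z
  set N₂ := setNbhd G R₂ \ Z
  have hAB_union : A ∪ B ⊆ N₁ ∪ N₂ := by
    rintro v (hv | hv)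
    · rcases setNbhd_inter_subset G R₁ R₂ hv.1 with h | h
      · exact Or.inl ⟨h, hv.2⟩
      · exact Or.inr ⟨h, hv.2⟩
    · rcases setNbhd_union_subset G R₁ R₂ hv.1 with h | h
      · exact Or.inl ⟨h, hv.2⟩
      · exact Or.inr ⟨h, hv.2⟩
  have hAB_inter : A ∩ B ⊆ N₁ ∩ N₂ := by
    rintro v ⟨hvA, hvB⟩
    obtain ⟨h1, h2⟩ := setNbhd_inter_inter_union_subset G R₁ R₂ ⟨hvA.1, hvB.1⟩
    exact ⟨⟨h1, hvA.2⟩, ⟨h2, hvA.2⟩⟩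
  have e1 : (A ∩ B).ncard + (A ∪ B).ncard = A.ncard + B.ncard :=
    Set.ncard_inter_add_ncard_union A B (Set.toFinite A) (Set.toFinite B)
  have e2 : (N₁ ∩ N₂).ncard + (N₁ ∪ N₂).ncard = N₁.ncard + N₂.ncard :=
    Set.ncard_inter_add_ncard_union N₁ N₂ (Set.toFinite N₁) (Set.toFinite N₂)
  have i1 : (A ∪ B).ncard ≤ (N₁ ∪ N₂).ncard := Set.ncard_le_ncard hAB_union (Set.toFinite _)
  have i2 : (A ∩ B).ncard ≤ (N₁ ∩ N₂).ncard := Set.ncard_le_ncard hAB_inter (Set.toFinite _)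
  omega

end card

section Counting
variable [Fintype V] (G : SimpleGraph V) (Y : Set V)

def Sp (Z X W : Set V) : Prop :=
  ∀ x ∈ X \ (W ∪ Z), ∀ y ∈ Y \ (W ∪ Z), ¬ Conn G (W ∪ Z) x y

def RS (Z X W : Set V) : Set V := reachSet G (W ∪ Z) X

def Bd (Z R : Set V) : Set V := setNbhd G R \ Z

def Mnl (Z X W : Set V) : Prop := ∀ W' ⊆ W, Sp G Y Z X W' → W' = W

def Thd (Z X W : Set V) : Prop :=
  ∀ U, U ⊆ Zᶜ → U ∩ X = ∅ → Sp G Y Z X U → U.ncard ≤ W.ncard →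
    ¬ (RS G Z X W ⊂ RS G Z X U)

def CNT (X₀ Z X' : Set V) (p : ℕ) : Set (Set V) :=
  {W | W ⊆ Zᶜ ∧ W ∩ X₀ = ∅ ∧ Sp G Y Z X₀ W ∧ Mnl G Y Z X₀ W ∧ Thd G Y Z X₀ W ∧
    W.ncard ≤ p ∧ X' \ X₀ ⊆ RS G Z X₀ W}

noncomputable def lam (Z X' : Set V) : ℕ :=
  sInf {n | ∃ U, U ⊆ Zᶜ ∧ U ∩ X' = ∅ ∧ Sp G Y Z X' U ∧ U.ncard = n}

variable {G Y}

set_option linter.unusedSectionVars false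

lemma inter_empty_not {α : Type*} {s t : Set α} (h : s ∩ t = ∅) {a : α} (ha : a ∈ s) :
    a ∉ t := fun ht => (Set.eq_empty_iff_forall_notMem.1 h a) ⟨ha, ht⟩


lemma sp_of_eq {Z X W Z' W' : Set V} (h : W ∪ Z = W' ∪ Z') :
    Sp G Y Z X W ↔ Sp G Y Z' X W' := by unfold Sp; rw [h]

lemma rs_of_eq {Z X W Z' W' : Set V} (h : W ∪ Z = W' ∪ Z') :
    RS G Z X W = RS G Z' X W' := by unfold RS; rw [h]

lemma sp_anti_src {Z X X' W : Set V} (hXX : X ⊆ X') (h : Sp G Y Z X' W) : Sp G Y Z X W :=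
  fun x hx => h x ⟨hXX hx.1, hx.2⟩

lemma rs_Y_empty {Z X W : Set V} (h : Sp G Y Z X W) : RS G Z X W ∩ Y = ∅ := by
  ext y
  simp only [Set.mem_inter_iff, Set.mem_empty_iff_false, iff_false, not_and]
  intro hy hyY
  obtain ⟨x, hx, hc⟩ := mem_reachSet.1 hy
  exact h x hx y ⟨hyY, reachSet_subset_compl hy⟩ hc

lemma sp_of_closed {Z X : Set V} {R : Set V} (hX : X \ (Bd G Z R ∪ Z) ⊆ R)
    (hY : R ∩ Y = ∅) : Sp G Y Z X (Bd G Z R) := by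
  intro x hx y hy hconn
  have hyR : y ∈ R := by
    refine hconn.confine (hX hx) ?_
    intro a ha b hadj hb
    by_contra hbR
    have : b ∈ setNbhd G R := ⟨hbR, a, ha, hadj⟩
    by_cases hbZ : b ∈ Z
    · exact hb (Or.inr hbZ)
    · exact hb (Or.inl ⟨this, hbZ⟩)
  rw [Set.eq_empty_iff_forall_notMem] at hY
  exact hY y ⟨hyR, hy.1⟩

lemma bd_rs_subset {Z X W : Set V} (hW : W ⊆ Zᶜ) : Bd G Z (RS G Z X W) ⊆ W := by
  rintro v ⟨hv, hvZ⟩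
  rcases setNbhd_reachSet_subset hv with h | h
  · exact h
  · exact absurd h hvZ

lemma sp_absorb {Z X X' W : Set V} (h : Sp G Y Z X W) (habs : X' \ X ⊆ RS G Z X W) :
    Sp G Y Z X' W := by
  intro x hx y hy hc
  by_cases hxX : x ∈ X
  · exact h x ⟨hxX, hx.2⟩ y hy hc
  · obtain ⟨x₀, hx₀, hc₀⟩ := mem_reachSet.1 (habs ⟨hx.1, hxX⟩)
    exact h x₀ hx₀ y hy (hc₀.trans hc)

lemma lam_le {Z X' U : Set V} (h1 : U ⊆ Zᶜ) (h2 : U ∩ X' = ∅) (h3 : Sp G Y Z X' U) :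
    lam G Y Z X' ≤ U.ncard :=
  Nat.sInf_le ⟨U, h1, h2, h3, rfl⟩

/-- derived facts about a member of `CNT`. -/
lemma cnt_facts {X₀ Z X' : Set V} {p : ℕ} {W : Set V} (hX : X₀ ⊆ X')
    (hW : W ∈ CNT G Y X₀ Z X' p) :
    W ∩ X' = ∅ ∧ Sp G Y Z X' W ∧ RS G Z X' W = RS G Z X₀ W ∧ lam G Y Z X' ≤ W.ncard := by
  obtain ⟨hWZ, hWX₀, hsp, hmnl, hthd, hcard, hinv⟩ := hW
  have hdisj : W ∩ X' = ∅ := by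
    ext v
    simp only [Set.mem_inter_iff, Set.mem_empty_iff_false, iff_false, not_and]
    intro hvW hvX'
    by_cases hvX₀ : v ∈ X₀
    · exact inter_empty_not hWX₀ hvW hvX₀
    · exact (reachSet_subset_compl (hinv ⟨hvX', hvX₀⟩)) (Or.inl hvW)
  have hsp' : Sp G Y Z X' W := sp_absorb hsp (fun x hx => hinv hx)
  exact ⟨hdisj, hsp', reachSet_absorb hX hinv, lam_le hWZ hdisj hsp'⟩

lemma cnt_bd_eq {X₀ Z X' : Set V} {p : ℕ} {W : Set V}
    (hW : W ∈ CNT G Y X₀ Z X' p) : W = Bd G Z (RS G Z X₀ W) := by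
  obtain ⟨hWZ, hWX₀, hsp, hmnl, hthd, hcard, hinv⟩ := hW
  refine (hmnl _ (bd_rs_subset hWZ) ?_).symm
  refine sp_of_closed ?_ (rs_Y_empty hsp)
  intro x hx
  refine subset_reachSet ⟨hx.1, ?_⟩
  rintro (hxW | hxZ)
  · exact inter_empty_not hWX₀ hxW hx.1
  · exact hx.2 (Or.inr hxZ)

/-- boundary of the reach set of a disjoint separator is again such. -/
lemma bd_facts {Z X' T : Set V} (hT1 : T ⊆ Zᶜ) (hT2 : T ∩ X' = ∅) (hT3 : Sp G Y Z X' T) :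
    Bd G Z (RS G Z X' T) ⊆ Zᶜ ∧ Bd G Z (RS G Z X' T) ∩ X' = ∅ ∧
      Sp G Y Z X' (Bd G Z (RS G Z X' T)) ∧ lam G Y Z X' ≤ (Bd G Z (RS G Z X' T)).ncard := by
  set R := RS G Z X' T with hR
  have hXR : X' \ Z ⊆ R := by
    intro x hx
    refine subset_reachSet ⟨hx.1, ?_⟩
    rintro (hxT | hxZ)
    · exact inter_empty_not hT2 hxT hx.1
    · exact hx.2 hxZ
  have h1 : Bd G Z R ⊆ Zᶜ := fun v hv => hv.2
  have h2 : Bd G Z R ∩ X' = ∅ := by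
    ext v
    simp only [Set.mem_inter_iff, Set.mem_empty_iff_false, iff_false, not_and]
    rintro ⟨hv, hvZ⟩ hvX'
    exact hv.1 (hXR ⟨hvX', hvZ⟩)
  have h3 : Sp G Y Z X' (Bd G Z R) := by
    refine sp_of_closed (fun x hx => hXR ⟨hx.1, fun h => hx.2 (Or.inr h)⟩) (rs_Y_empty hT3)
  exact ⟨h1, h2, h3, lam_le h1 h2 h3⟩

/-- reach of boundary-of-reach equals reach. -/
lemma rs_bd_eq {Z X' T : Set V} (hT2 : T ∩ X' = ∅) :
    RS G Z X' (Bd G Z (RS G Z X' T)) = RS G Z X' T := by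
  set R := RS G Z X' T with hR
  have hRdisj : ∀ a ∈ R, a ∉ Bd G Z R ∪ Z := by
    intro a ha
    rintro (h | h)
    · exact inter_empty_not (setNbhd_disjoint G R) h.1 ha
    · exact (reachSet_subset_compl ha) (Or.inr h)
  apply Set.Subset.antisymm
  · intro y hy
    obtain ⟨x, hx, hc⟩ := mem_reachSet.1 hy
    have hxR : x ∈ R := by
      refine subset_reachSet ⟨hx.1, ?_⟩
      rintro (hxT | hxZ)
      · exact inter_empty_not hT2 hxT hx.1
      · exact hx.2 (Or.inr hxZ)
    refine hc.confine hxR ?_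
    intro a ha b hadj hb
    by_contra hbR
    have hbn : b ∈ setNbhd G R := ⟨hbR, a, ha, hadj⟩
    by_cases hbZ : b ∈ Z
    · exact hb (Or.inr hbZ)
    · exact hb (Or.inl ⟨hbn, hbZ⟩)
  · intro r hr
    obtain ⟨x, hx, hchain⟩ := reachSet_chain_in hr
    exact mem_reachSet.2 ⟨x, ⟨hx.1, hRdisj x (subset_reachSet hx)⟩,
      conn_of_chain hRdisj (subset_reachSet hx) hr hchain⟩


lemma good_bd {Z X' R : Set V} (hXR : X' \ Z ⊆ R) (hRY : R ∩ Y = ∅) :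
    Bd G Z R ⊆ Zᶜ ∧ Bd G Z R ∩ X' = ∅ ∧ Sp G Y Z X' (Bd G Z R) ∧
      lam G Y Z X' ≤ (Bd G Z R).ncard := by
  have h1 : Bd G Z R ⊆ Zᶜ := fun v hv => hv.2
  have h2 : Bd G Z R ∩ X' = ∅ := by
    ext v
    simp only [Set.mem_inter_iff, Set.mem_empty_iff_false, iff_false, not_and]
    rintro ⟨hv, hvZ⟩ hvX'
    exact hv.1 (hXR ⟨hvX', hvZ⟩)
  have h3 : Sp G Y Z X' (Bd G Z R) :=
    sp_of_closed (fun x hx => hXR ⟨hx.1, fun h => hx.2 (Or.inr h)⟩) hRY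
  exact ⟨h1, h2, h3, lam_le h1 h2 h3⟩

theorem count_le (X₀ : Set V) :
    ∀ μ : ℕ, ∀ Z X' : Set V, ∀ p : ℕ, X₀ ⊆ X' → 2*p ≤ lam G Y Z X' + μ →
      (CNT G Y X₀ Z X' p).ncard ≤ 2^μ := by
  intro μ
  induction μ with
  | zero =>
    intro Z X' p hX hle
    rcases Set.eq_empty_or_nonempty (CNT G Y X₀ Z X' p) with he | ⟨W₀, hW₀⟩
    · simp [he]
    · have h4 := (cnt_facts hX hW₀).2.2.2
      have hcard : W₀.ncard ≤ p := hW₀.2.2.2.2.2.1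
      have hsub : CNT G Y X₀ Z X' p ⊆ {(∅ : Set V)} := by
        intro W hW
        have hc : W.ncard = 0 := by have := hW.2.2.2.2.2.1; omega
        have := (Set.ncard_eq_zero (Set.toFinite W)).1 hc
        simp [this]
      calc (CNT G Y X₀ Z X' p).ncard ≤ ({(∅ : Set V)} : Set (Set V)).ncard :=
            Set.ncard_le_ncard hsub (Set.toFinite _)
        _ ≤ 2 ^ 0 := by simp
  | succ μ ih =>
    intro Z X' p hX hle
    rcases Set.eq_empty_or_nonempty (CNT G Y X₀ Z X' p) with he | ⟨W₀, hW₀⟩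
    · simp [he]
    set l := lam G Y Z X' with hldef
    have hlp : l ≤ p := le_trans (cnt_facts hX hW₀).2.2.2 hW₀.2.2.2.2.2.1
    have hW₀facts := cnt_facts hX hW₀
    have hlamne : {n | ∃ U, U ⊆ Zᶜ ∧ U ∩ X' = ∅ ∧ Sp G Y Z X' U ∧ U.ncard = n}.Nonempty :=
      ⟨W₀.ncard, W₀, hW₀.1, hW₀facts.1, hW₀facts.2.1, rfl⟩
    by_cases hl0 : l = 0
    · -- λ = 0 : at most one important separator
      obtain ⟨U₀, hU₀Z, hU₀X, hU₀sp, hU₀card⟩ := Nat.sInf_mem hlamne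
      have hU₀e : U₀ = ∅ := by
        refine (Set.ncard_eq_zero (Set.toFinite _)).1 ?_
        rw [hU₀card]; exact hl0
      subst hU₀e
      have hsp₀ : Sp G Y Z X₀ (∅ : Set V) := sp_anti_src hX hU₀sp
      have key : ∀ W ∈ CNT G Y X₀ Z X' p, W = Bd G Z (RS G Z X₀ (∅ : Set V)) := by
        intro W hW
        have hthd := hW.2.2.2.2.1
        have hsub : RS G Z X₀ W ⊆ RS G Z X₀ (∅ : Set V) :=
          reachSet_mono_avoid (by simp)
        have hnsub := hthd ∅ (Set.empty_subset _) (by simp) hsp₀ (by simp)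
        have heq : RS G Z X₀ W = RS G Z X₀ (∅ : Set V) := by
          by_contra hne'
          exact hnsub ⟨hsub, fun hc => hne' (Set.Subset.antisymm hsub hc)⟩
        rw [cnt_bd_eq hW, heq]
      have hsub : CNT G Y X₀ Z X' p ⊆ {Bd G Z (RS G Z X₀ (∅ : Set V))} := by
        intro W hW; simp [key W hW]
      calc (CNT G Y X₀ Z X' p).ncard ≤ _ := Set.ncard_le_ncard hsub (Set.toFinite _)
        _ = 1 := Set.ncard_singleton _
        _ ≤ 2 ^ (μ + 1) := Nat.one_le_two_pow
    · -- λ ≥ 1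
      have hl1 : 1 ≤ l := Nat.one_le_iff_ne_zero.2 hl0
      obtain ⟨T₁, hT₁Z, hT₁X, hT₁sp, hT₁card⟩ := Nat.sInf_mem hlamne
      set P : Set (Set V) := {R | ∃ T, T ⊆ Zᶜ ∧ T ∩ X' = ∅ ∧ Sp G Y Z X' T ∧
        R = RS G Z X' T ∧ (Bd G Z R).ncard = l} with hPdef
      have hPne : (RS G Z X' T₁) ∈ P := by
        refine ⟨T₁, hT₁Z, hT₁X, hT₁sp, rfl, le_antisymm ?_ ?_⟩
        · calc (Bd G Z (RS G Z X' T₁)).ncard ≤ T₁.ncard :=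
              Set.ncard_le_ncard (bd_rs_subset hT₁Z) (Set.toFinite _)
            _ = l := hT₁card
        · exact (bd_facts hT₁Z hT₁X hT₁sp).2.2.2
      obtain ⟨Rs, hRsP, hmax⟩ :=
        Set.Finite.exists_maximalFor Set.ncard P (Set.toFinite P) ⟨_, hPne⟩
      obtain ⟨Ts, hTsZ, hTsX, hTssp, hRseq, hBscard⟩ := hRsP
      set Bs := Bd G Z Rs with hBsdef
      have hRs_eq : RS G Z X' Bs = Rs := by
        rw [hBsdef, hRseq]; exact rs_bd_eq hTsX
      have hBsfacts : Bs ⊆ Zᶜ ∧ Bs ∩ X' = ∅ ∧ Sp G Y Z X' Bs ∧ l ≤ Bs.ncard := by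
        have := bd_facts hTsZ hTsX hTssp
        rw [← hRseq] at this
        exact this
      obtain ⟨hBsZ, hBsX, hBssp, -⟩ := hBsfacts
      have hXRs : X' \ Z ⊆ Rs := by
        intro x hx
        rw [← hRs_eq]
        exact subset_reachSet ⟨hx.1, by
          rintro (h | h)
          · exact inter_empty_not hBsX h hx.1
          · exact hx.2 h⟩
      have hRsY : Rs ∩ Y = ∅ := by rw [← hRs_eq]; exact rs_Y_empty hBssp
      have hRsZ : ∀ a ∈ Rs, a ∉ Z := by
        intro a ha
        rw [← hRs_eq] at ha
        exact fun h => reachSet_subset_compl ha (Or.inr h)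
      have hBs_ne : Bs.Nonempty := by
        apply Set.nonempty_of_ncard_ne_zero; omega
      obtain ⟨v, hv⟩ := hBs_ne
      have hvZ : v ∉ Z := hv.2
      have hvX' : v ∉ X' := inter_empty_not hBsX hv
      have hvRs : v ∉ Rs := hv.1.1
      obtain ⟨-, us, husRs, hadjs⟩ := hv.1
      -- chains inside Rs can reach any of its points from X'
      have hRs_reach : ∀ (A : Set V), (∀ a ∈ Rs, a ∉ A) → ∀ r ∈ Rs,
          ∃ x ∈ X' \ (Bs ∪ Z), x ∈ Rs ∧ Conn G A x r := by
        intro A hA r hr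
        have hr' : r ∈ RS G Z X' Bs := by rw [hRs_eq]; exact hr
        obtain ⟨x, hx, hchain⟩ := reachSet_chain_in hr'
        have heq : reachSet G (Bs ∪ Z) X' = Rs := hRs_eq
        rw [heq] at hchain
        have hxRs : x ∈ Rs := by rw [← hRs_eq]; exact subset_reachSet hx
        exact ⟨x, hx, hxRs, conn_of_chain hA hxRs hr hchain⟩
      -- PUSH
      have push : ∀ W ∈ CNT G Y X₀ Z X' p, Rs ⊆ RS G Z X₀ W := by
        intro W hW
        obtain ⟨hWdisj, hWsp', hWrs_eq, hWlam⟩ := cnt_facts hX hW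
        obtain ⟨hWZ, hWX₀, hWsp, hWmnl, hWthd, hWcard, hWinv⟩ := hW
        have hbd : W = Bd G Z (RS G Z X₀ W) :=
          cnt_bd_eq ⟨hWZ, hWX₀, hWsp, hWmnl, hWthd, hWcard, hWinv⟩
        set R₂ := RS G Z X₀ W with hR₂def
        have hR₂A : ∀ a ∈ R₂, a ∉ W ∪ Z := fun a ha => reachSet_subset_compl ha
        have hXR₂ : X' \ Z ⊆ R₂ := by
          intro x hx
          by_cases hx₀ : x ∈ X₀
          · exact subset_reachSet ⟨hx₀, by
              rintro (h | h)
              · exact inter_empty_not hWX₀ h hx₀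
              · exact hx.2 h⟩
          · exact hWinv ⟨hx.1, hx₀⟩
        by_contra hnsub
        obtain ⟨r₁, hr₁Rs, hr₁R₂⟩ := Set.not_subset.1 hnsub
        set Ru := Rs ∪ R₂ with hRudef
        set U := Bd G Z Ru with hUdef
        have hXRu : X' \ Z ⊆ Ru := fun x hx => Or.inl (hXRs hx)
        have hR₂Y : R₂ ∩ Y = ∅ := rs_Y_empty hWsp
        have hRuY : Ru ∩ Y = ∅ := by
          rw [hRudef, Set.union_inter_distrib_right, hRsY, hR₂Y, Set.union_empty]
        have hRiY : (Rs ∩ R₂) ∩ Y = ∅ := by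
          apply Set.eq_empty_of_subset_empty
          rw [← hRsY]
          exact Set.inter_subset_inter_left Y Set.inter_subset_left
        have hXRi : X' \ Z ⊆ Rs ∩ R₂ := fun x hx => ⟨hXRs hx, hXR₂ hx⟩
        have hUgood := good_bd (G := G) (Y := Y) hXRu hRuY
        have hIgood := good_bd (G := G) (Y := Y) hXRi hRiY
        have hsize : U.ncard ≤ W.ncard := by
          have hsm : (Bd G Z (Rs ∩ R₂)).ncard + (Bd G Z (Rs ∪ R₂)).ncard ≤
              (Bd G Z Rs).ncard + (Bd G Z R₂).ncard := submod_card G Rs R₂ Z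
          rw [← hbd, ← hBsdef, ← hRudef, ← hUdef] at hsm
          have hIl : l ≤ (Bd G Z (Rs ∩ R₂)).ncard := hIgood.2.2.2
          omega
        have hUX₀ : U ∩ X₀ = ∅ := by
          apply Set.eq_empty_of_subset_empty
          rw [← hUgood.2.1]
          exact Set.inter_subset_inter_right U hX
        have hUsp₀ : Sp G Y Z X₀ U := sp_anti_src hX hUgood.2.2.1
        have hURu : ∀ a ∈ Ru, a ∉ U ∪ Z := by
          intro a ha
          rintro (h | h)
          · exact inter_empty_not (setNbhd_disjoint G Ru) h.1 ha
          · rcases ha with ha | ha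
            · exact hRsZ a ha h
            · exact hR₂A a ha (Or.inr h)
        have hsub : RS G Z X₀ W ⊆ RS G Z X₀ U := by
          intro r hr
          obtain ⟨x, hx, hchain⟩ := reachSet_chain_in hr
          exact mem_reachSet.2 ⟨x, ⟨hx.1, hURu x (Or.inr (subset_reachSet hx))⟩,
            conn_of_chain (fun a ha => hURu a (Or.inr ha)) (subset_reachSet hx) hr hchain⟩
        have hr₁U : r₁ ∈ RS G Z X₀ U := by
          obtain ⟨x'', hx'', hx''Rs, hconn⟩ :=
            hRs_reach (U ∪ Z) (fun a ha => hURu a (Or.inl ha)) r₁ hr₁Rs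
          by_cases hx₀ : x'' ∈ X₀
          · exact mem_reachSet.2 ⟨x'', ⟨hx₀, hURu x'' (Or.inl hx''Rs)⟩, hconn⟩
          · have : x'' ∈ R₂ := hXR₂ ⟨hx''.1, fun h => hx''.2 (Or.inr h)⟩
            exact reachSet_conn (hsub this) hconn
        refine hWthd U hUgood.1 hUX₀ hUsp₀ hsize ⟨hsub, fun hc => ?_⟩
        exact hr₁R₂ (hc hr₁U)
      have vRW : ∀ W ∈ CNT G Y X₀ Z X' p, v ∉ W → v ∈ RS G Z X₀ W := by
        intro W hW hvW
        refine reachSet_closed ((push W hW) husRs) hadjs ?_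
        rintro (h | h)
        · exact hvW h
        · exact hvZ h
      -- split
      set P₁ : Set (Set V) := {W ∈ CNT G Y X₀ Z X' p | v ∈ W} with hP₁def
      set P₂ : Set (Set V) := {W ∈ CNT G Y X₀ Z X' p | v ∉ W} with hP₂def
      have hsplit : CNT G Y X₀ Z X' p = P₁ ∪ P₂ := by
        ext W
        by_cases hvW : v ∈ W <;> simp [hP₁def, hP₂def, hvW]
      -- branch B
      set X'' := (X' ∪ Rs) ∪ {v} with hX''def
      have hXX'' : X₀ ⊆ X'' := fun x hx => Or.inl (Or.inl (hX hx))
      have hP₂sub : P₂ ⊆ CNT G Y X₀ Z X'' p := by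
        rintro W ⟨hW, hvW⟩
        obtain ⟨hWZ, hWX₀, hWsp, hWmnl, hWthd, hWcard, hWinv⟩ := hW
        refine ⟨hWZ, hWX₀, hWsp, hWmnl, hWthd, hWcard, ?_⟩
        rintro x ⟨hx, hx₀⟩
        rcases hx with (hx | hx) | hx
        · exact hWinv ⟨hx, hx₀⟩
        · exact push W ⟨hWZ, hWX₀, hWsp, hWmnl, hWthd, hWcard, hWinv⟩ hx
        · rw [hx]
          exact vRW W ⟨hWZ, hWX₀, hWsp, hWmnl, hWthd, hWcard, hWinv⟩ hvW
      have hlam₂ : ∀ U, U ⊆ Zᶜ → U ∩ X'' = ∅ → Sp G Y Z X'' U → l + 1 ≤ U.ncard := by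
        intro U hUZ hUX'' hUsp
        set R₂ := RS G Z X'' U with hR₂def
        have hXR₂ : X'' \ Z ⊆ R₂ := by
          intro x hx
          exact subset_reachSet ⟨hx.1, by
            rintro (h | h)
            · exact inter_empty_not hUX'' h hx.1
            · exact hx.2 h⟩
        have hRsR₂ : Rs ⊆ R₂ := fun r hr => hXR₂ ⟨Or.inl (Or.inr hr), hRsZ r hr⟩
        have hvR₂ : v ∈ R₂ := hXR₂ ⟨Or.inr rfl, hvZ⟩
        set T := Bd G Z R₂ with hTdef
        have hR₂Y : R₂ ∩ Y = ∅ := rs_Y_empty hUsp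
        have hXR₂' : X' \ Z ⊆ R₂ := fun x hx => hXR₂ ⟨Or.inl (Or.inl hx.1), hx.2⟩
        have hTgood := good_bd (G := G) (Y := Y) hXR₂' hR₂Y
        have hTU : T ⊆ U := bd_rs_subset hUZ
        by_contra hlt
        push_neg at hlt
        have hUl : U.ncard ≤ l := by omega
        have hTcard : T.ncard = l :=
          le_antisymm (le_trans (Set.ncard_le_ncard hTU (Set.toFinite _)) hUl) hTgood.2.2.2
        set R₃ := RS G Z X' T with hR₃def
        have hR₃P : R₃ ∈ P := by
          refine ⟨T, hTgood.1, hTgood.2.1, hTgood.2.2.1, rfl, le_antisymm ?_ ?_⟩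
          · calc (Bd G Z R₃).ncard ≤ T.ncard :=
                Set.ncard_le_ncard (bd_rs_subset hTgood.1) (Set.toFinite _)
              _ = l := hTcard
          · exact (bd_facts hTgood.1 hTgood.2.1 hTgood.2.2.1).2.2.2
        have hTR₂ : ∀ a ∈ R₂, a ∉ T ∪ Z := by
          intro a ha
          rintro (h | h)
          · exact inter_empty_not (setNbhd_disjoint G R₂) h.1 ha
          · exact reachSet_subset_compl ha (Or.inr h)
        have hRsR₃ : Rs ⊆ R₃ := by
          intro r hr
          obtain ⟨x'', hx'', hx''Rs, hconn⟩ :=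
            hRs_reach (T ∪ Z) (fun a ha => hTR₂ a (hRsR₂ ha)) r hr
          exact mem_reachSet.2 ⟨x'', ⟨hx''.1, hTR₂ x'' (hRsR₂ hx''Rs)⟩, hconn⟩
        have hvR₃ : v ∈ R₃ := reachSet_closed (hRsR₃ husRs) hadjs (hTR₂ v hvR₂)
        have hlt' : Rs.ncard < R₃.ncard :=
          Set.ncard_lt_ncard ((Set.ssubset_iff_of_subset hRsR₃).2 ⟨v, hvR₃, hvRs⟩)
            (Set.toFinite _)
        have := hmax hR₃P (le_of_lt hlt')
        omega
      have hb₂ : (CNT G Y X₀ Z X'' p).ncard ≤ 2 ^ μ := by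
        rcases Set.eq_empty_or_nonempty (CNT G Y X₀ Z X'' p) with he | ⟨W₂, hW₂⟩
        · simp [he]
        · have hfacts := cnt_facts hXX'' hW₂
          have hlamne₂ : {n | ∃ U, U ⊆ Zᶜ ∧ U ∩ X'' = ∅ ∧ Sp G Y Z X'' U ∧
              U.ncard = n}.Nonempty := ⟨W₂.ncard, W₂, hW₂.1, hfacts.1, hfacts.2.1, rfl⟩
          obtain ⟨U₁, hU₁Z, hU₁X, hU₁sp, hU₁card⟩ := Nat.sInf_mem hlamne₂
          have hlam'' : l + 1 ≤ lam G Y Z X'' := by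
            rw [show lam G Y Z X'' = U₁.ncard from hU₁card.symm]
            exact hlam₂ U₁ hU₁Z hU₁X hU₁sp
          exact ih Z X'' p hXX'' (by omega)
      -- branch A
      have hp1 : 1 ≤ p := le_trans hl1 hlp
      obtain ⟨p', rfl⟩ : ∃ p', p = p' + 1 := ⟨p - 1, by omega⟩
      set Z' := insert v Z with hZ'def
      have hvX₀ : v ∉ X₀ := fun h => hvX' (hX h)
      have hP₁sub : ((fun W : Set V => W \ {v}) '' P₁) ⊆ CNT G Y X₀ Z' X' p' := by
        rintro _ ⟨W, ⟨hW, hvW⟩, rfl⟩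
        dsimp only
        obtain ⟨hWZ, hWX₀, hWsp, hWmnl, hWthd, hWcard, hWinv⟩ := hW
        have hkey : W ∪ Z = W \ {v} ∪ Z' := by
          ext a
          by_cases hav : a = v
          · subst hav; simp [hvW, hZ'def]
          · simp [hav, hZ'def]
        have hWv1 : (W \ {v}).ncard + 1 = W.ncard :=
          Set.ncard_diff_singleton_add_one hvW (Set.toFinite _)
        refine ⟨?_, ?_, ?_, ?_, ?_, ?_, ?_⟩
        · intro a ha
          rw [hZ'def]
          simp only [Set.mem_compl_iff, Set.mem_insert_iff]
          push_neg
          exact ⟨ha.2, hWZ ha.1⟩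
        · apply Set.eq_empty_of_subset_empty
          rw [← hWX₀]
          exact Set.inter_subset_inter_left X₀ Set.diff_subset
        · exact (sp_of_eq hkey).1 hWsp
        · intro W'' hsub hsp''
          have hvW'' : v ∉ W'' := fun h => (hsub h).2 rfl
          have hkey2 : insert v W'' ∪ Z = W'' ∪ Z' := by
            rw [Set.insert_union, hZ'def, Set.union_insert]
          have hins : insert v W'' = W :=
            hWmnl _ (Set.insert_subset hvW (hsub.trans Set.diff_subset))
              ((sp_of_eq hkey2).2 hsp'')
          have hfin := Set.insert_diff_self_of_notMem hvW''
          rw [hins] at hfin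
          exact hfin.symm
        · intro U hUZ' hUX₀ hUsp hUcard
          have hvU : v ∉ U := fun h => hUZ' h (Set.mem_insert v Z)
          have hiU : insert v U ∪ Z = U ∪ Z' := by
            rw [Set.insert_union, hZ'def, Set.union_insert]
          have h1 : insert v U ⊆ Zᶜ := by
            refine Set.insert_subset hvZ (hUZ'.trans ?_)
            intro a ha h
            exact ha (by rw [hZ'def]; exact Set.mem_insert_of_mem v h)
          have h2 : insert v U ∩ X₀ = ∅ := by
            ext a
            simp only [Set.mem_inter_iff, Set.mem_insert_iff, Set.mem_empty_iff_false,
              iff_false, not_and]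
            rintro (rfl | haU)
            · exact hvX₀
            · exact inter_empty_not hUX₀ haU
          have h3 : Sp G Y Z X₀ (insert v U) := (sp_of_eq hiU).2 hUsp
          have h4 : (insert v U).ncard ≤ W.ncard := by
            rw [Set.ncard_insert_of_notMem hvU (Set.toFinite _)]
            omega
          have hth := hWthd (insert v U) h1 h2 h3 h4
          intro hss
          apply hth
          rw [rs_of_eq hkey, rs_of_eq hiU]
          exact hss
        · omega
        · rw [← rs_of_eq hkey]
          exact hWinv
      have hinj : Set.InjOn (fun W : Set V => W \ {v}) P₁ := by
        rintro W₁ ⟨-, h₁⟩ W₂ ⟨-, h₂⟩ he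
        have he' : W₁ \ {v} = W₂ \ {v} := he
        have : insert v (W₁ \ {v}) = insert v (W₂ \ {v}) := by rw [he']
        rwa [Set.insert_diff_singleton, Set.insert_diff_singleton,
          Set.insert_eq_self.2 h₁, Set.insert_eq_self.2 h₂] at this
      have hlam₁ : ∀ U, U ⊆ Z'ᶜ → U ∩ X' = ∅ → Sp G Y Z' X' U → l ≤ U.ncard + 1 := by
        intro U hUZ' hUX' hUsp'
        have hvU : v ∉ U := fun h => hUZ' h (Set.mem_insert v Z)
        have hiU : insert v U ∪ Z = U ∪ Z' := by
          rw [Set.insert_union, hZ'def, Set.union_insert]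
        have h1 : insert v U ⊆ Zᶜ := by
          refine Set.insert_subset hvZ (hUZ'.trans ?_)
          intro a ha h
          exact ha (by rw [hZ'def]; exact Set.mem_insert_of_mem v h)
        have h2 : insert v U ∩ X' = ∅ := by
          ext a
          simp only [Set.mem_inter_iff, Set.mem_insert_iff, Set.mem_empty_iff_false,
            iff_false, not_and]
          rintro (rfl | haU)
          · exact hvX'
          · exact inter_empty_not hUX' haU
        have h3 : Sp G Y Z X' (insert v U) := (sp_of_eq hiU).2 hUsp'
        have := lam_le h1 h2 h3
        rw [Set.ncard_insert_of_notMem hvU (Set.toFinite _)] at this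
        exact this
      have hb₁ : (CNT G Y X₀ Z' X' p').ncard ≤ 2 ^ μ := by
        rcases Set.eq_empty_or_nonempty (CNT G Y X₀ Z' X' p') with he | ⟨W₁, hW₁⟩
        · simp [he]
        · have hfacts := cnt_facts hX hW₁
          have hlamne₁ : {n | ∃ U, U ⊆ Z'ᶜ ∧ U ∩ X' = ∅ ∧ Sp G Y Z' X' U ∧
              U.ncard = n}.Nonempty := ⟨W₁.ncard, W₁, hW₁.1, hfacts.1, hfacts.2.1, rfl⟩
          obtain ⟨U₁, hU₁Z, hU₁X, hU₁sp, hU₁card⟩ := Nat.sInf_mem hlamne₁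
          have hlam' : l ≤ lam G Y Z' X' + 1 := by
            rw [show lam G Y Z' X' = U₁.ncard from hU₁card.symm]
            exact hlam₁ U₁ hU₁Z hU₁X hU₁sp
          exact ih Z' X' p' hX (by omega)
      -- assemble
      have hP₁card : P₁.ncard ≤ 2 ^ μ := by
        rw [← Set.ncard_image_of_injOn hinj]
        exact le_trans (Set.ncard_le_ncard hP₁sub (Set.toFinite _)) hb₁
      have hP₂card : P₂.ncard ≤ 2 ^ μ := by
        exact le_trans (Set.ncard_le_ncard hP₂sub (Set.toFinite _)) hb₂
      calc (CNT G Y X₀ Z X' (p' + 1)).ncard = (P₁ ∪ P₂).ncard := by rw [hsplit]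
        _ ≤ P₁.ncard + P₂.ncard := Set.ncard_union_le _ _
        _ ≤ 2 ^ μ + 2 ^ μ := Nat.add_le_add hP₁card hP₂card
        _ = 2 ^ (μ + 1) := by ring

end Counting


-- ### glue: connectivity of induced subgraphs via chains
section Glue
variable {G : SimpleGraph V}


lemma connected_chain {T : Set V} {x y : V} (hc : (G.induce T).Connected)
    (hx : x ∈ T) (hy : y ∈ T) : Relation.ReflTransGen (chainRel G T) x y :=
  (hc.preconnected ⟨x, hx⟩ ⟨y, hy⟩).elim fun p => walk_chain G p

lemma connected_of_chains {T : Set V} (hne : T.Nonempty)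
    (h : ∀ x ∈ T, ∀ y ∈ T, Relation.ReflTransGen (chainRel G T) x y) :
    (G.induce T).Connected := by
  obtain ⟨x₀, hx₀⟩ := hne
  rw [SimpleGraph.connected_iff]
  exact ⟨fun a b => chain_reach G (h a.1 a.2 b.1 b.2) a.2 b.2, ⟨⟨x₀, hx₀⟩⟩⟩

lemma connected_insert {D : Set V} {b u : V} (hconn : (G.induce D).Connected)
    (huD : u ∈ D) (hadj : G.Adj u b) : (G.induce (insert b D)).Connected := by
  have hDsub : D ⊆ insert b D := Set.subset_insert b D
  have hmono : ∀ {x y : V}, Relation.ReflTransGen (chainRel G D) x y →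
      Relation.ReflTransGen (chainRel G (insert b D)) x y :=
    fun h => Relation.ReflTransGen.mono (chainRel_mono G hDsub) _ _ h
  have hbu : Relation.ReflTransGen (chainRel G (insert b D)) b u :=
    Relation.ReflTransGen.single ⟨Set.mem_insert b D, hDsub huD, hadj.symm⟩
  refine connected_of_chains ⟨b, Set.mem_insert b D⟩ ?_
  have hsymm : ∀ {x y : V}, Relation.ReflTransGen (chainRel G (insert b D)) x y →
      Relation.ReflTransGen (chainRel G (insert b D)) y x := fun h => by
    haveI : Std.Symm (chainRel G (insert b D)) := ⟨fun a b hab => chainRel_symm G _ hab⟩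
    exact Std.Symm.symm _ _ h
  rintro x (rfl | hxD) y (rfl | hyD)
  · exact Relation.ReflTransGen.refl
  · exact hbu.trans (hmono (connected_chain hconn huD hyD))
  · exact hsymm (hbu.trans (hmono (connected_chain hconn huD hxD)))
  · exact hmono (connected_chain hconn hxD hyD)

lemma chip_not_nbhd {C : Set V} {a : V} (ha : a ∈ C) : a ∉ setNbhd G C :=
  fun h => h.1 ha

/-- the reach set of a connected set from one of its points, avoiding its
neighbourhood, is the set itself. -/
lemma reach_chip_eq {C : Set V} {w : V} (hconn : (G.induce C).Connected) (hw : w ∈ C) :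
    reachSet G (setNbhd G C) {w} = C := by
  apply Set.Subset.antisymm
  · intro y hy
    obtain ⟨x, hx, hc⟩ := mem_reachSet.1 hy
    have hxw : x = w := hx.1
    subst hxw
    refine hc.confine hw ?_
    intro a haC bb hadj hbb
    by_contra hbC
    exact hbb ⟨hbC, a, haC, hadj⟩
  · intro c hc
    exact mem_reachSet.2 ⟨w, ⟨rfl, chip_not_nbhd hw⟩,
      conn_of_chain (fun a ha => chip_not_nbhd ha) hw hc (connected_chain hconn hw hc)⟩

lemma reach_chip_eq' {C : Set V} (hconn : (G.induce C).Connected) (hne : C.Nonempty) :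
    reachSet G (setNbhd G C) C = C := by
  apply Set.Subset.antisymm
  · intro y hy
    obtain ⟨x, hx, hc⟩ := mem_reachSet.1 hy
    refine hc.confine hx.1 ?_
    intro a haC bb hadj hbb
    by_contra hbC
    exact hbb ⟨hbC, a, haC, hadj⟩
  · intro c hc
    exact mem_reachSet.2 ⟨c, ⟨hc, chip_not_nbhd hc⟩, Conn.refl (chip_not_nbhd hc)⟩

end Glue

section ChipCNT
variable [Fintype V] {G : SimpleGraph V} {S : Set V} {k : ℕ}

lemma sp_iff_isSeparator {X W : Set V} :
    Sp G S (∅ : Set V) X W ↔ IsSeparator G X S W := by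
  rw [isSeparator_iff]
  unfold Sp
  rw [Set.union_empty]

lemma rs_empty {X W : Set V} : RS G (∅ : Set V) X W = reachSet G W X := by
  unfold RS
  rw [Set.union_empty]

lemma chip_mem_CNT {C : Set V} (hC : IsChip G k S C) {w : V} (hw : w ∈ C) :
    setNbhd G C ∈ CNT G S {w} ∅ {w} (3 * k) := by
  have hCconn := hC.1
  have hCcard := hC.2.1
  have hCsep := hC.2.2.1
  have hCmnl := hC.2.2.2.1
  have hCthd := hC.2.2.2.2
  set W := setNbhd G C with hWdef
  have hwW : w ∉ W := chip_not_nbhd hw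
  have hCW : ∀ a ∈ C, a ∉ W := fun a ha => chip_not_nbhd ha
  have hWw : W ∩ {w} = ∅ := by
    ext a
    simp only [Set.mem_inter_iff, Set.mem_singleton_iff, Set.mem_empty_iff_false,
      iff_false, not_and]
    rintro haW rfl
    exact hwW haW
  have hreach : reachSet G W {w} = C := reach_chip_eq hCconn hw
  have hsub_sep : ∀ W' ⊆ W, IsSeparator G {w} S W' → IsSeparator G C S W' := by
    intro W' hW'W hsep'
    rw [isSeparator_iff] at hsep' ⊢
    intro x hx y hy hc
    have hxW' : ∀ a ∈ C, a ∉ W' := fun a ha h => hCW a ha (hW'W h)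
    have hwx : Conn G W' w x :=
      conn_of_chain hxW' hw hx.1 (connected_chain hCconn hw hx.1)
    exact hsep' w ⟨rfl, hxW' w hw⟩ y hy (hwx.trans hc)
  refine ⟨fun a _ => Set.notMem_empty a, hWw, ?_, ?_, ?_, hCcard, by simp⟩
  · refine sp_iff_isSeparator.2 (fun x hx y hy => ?_)
    have hxw : x = w := hx.1
    refine hCsep x ⟨?_, hx.2⟩ y hy
    rw [hxw]; exact hw
  · intro W' hW'W hsp'
    exact hCmnl W' hW'W (hsub_sep W' hW'W (sp_iff_isSeparator.1 hsp'))
  · intro U hUZ hUX hUsp hUcard hss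
    rw [rs_empty, rs_empty, hreach] at hss
    have hwU : w ∉ U := by
      intro h
      exact (Set.eq_empty_iff_forall_notMem.1 hUX w) ⟨h, rfl⟩
    have hCRU : C ⊆ reachSet G U {w} := hss.1
    have hCU : ∀ a ∈ C, a ∉ U := fun a ha h => reachSet_subset_compl (hCRU ha) h
    have hUsp' : ∀ x ∈ ({w} : Set V) \ U, ∀ y ∈ S \ U, ¬ Conn G U x y :=
      isSeparator_iff.1 (sp_iff_isSeparator.1 hUsp)
    have hUsep : IsSeparator G C S U := by
      rw [isSeparator_iff]
      intro x hx y hy hc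
      obtain ⟨x₀, hx₀, hcx⟩ := mem_reachSet.1 (hCRU hx.1)
      exact hUsp' x₀ hx₀ y hy (hcx.trans hc)
    have hRU : reachSet G U C = reachSet G U {w} := by
      apply Set.Subset.antisymm
      · intro y hy
        obtain ⟨x, hx, hc⟩ := mem_reachSet.1 hy
        obtain ⟨x₀, hx₀, hcx⟩ := mem_reachSet.1 (hCRU hx.1)
        exact mem_reachSet.2 ⟨x₀, hx₀, hcx.trans hc⟩
      · exact reachSet_mono_src (by simpa using hw)
    have hRC : reachSet G W C = C := reach_chip_eq' hCconn ⟨w, hw⟩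
    exact hCthd U hUsep hUcard (by rw [hRC, hRU]; exact hss)
end ChipCNT

-- ### counting helper
lemma ncard_biUnion_le {α β : Type*} (f : α → Set β) {B : ℕ} :
    ∀ s : Set α, s.Finite → (∀ a ∈ s, (f a).ncard ≤ B) →
      (⋃ a ∈ s, f a).ncard ≤ s.ncard * B := by
  intro s hs
  refine Set.Finite.induction_on
    (motive := fun s _ => (∀ a ∈ s, (f a).ncard ≤ B) →
      (⋃ a ∈ s, f a).ncard ≤ s.ncard * B) s hs (by simp) ?_
  intro a t hat htfin ih h
  rw [Set.biUnion_insert]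
  have h2 := ih (fun x hx => h x (Set.mem_insert_of_mem a hx))
  have h3 : (f a).ncard ≤ B := h a (Set.mem_insert a t)
  have h4 : (insert a t).ncard = t.ncard + 1 := Set.ncard_insert_of_notMem hat htfin
  calc (f a ∪ ⋃ x ∈ t, f x).ncard ≤ (f a).ncard + (⋃ x ∈ t, f x).ncard :=
        Set.ncard_union_le _ _
    _ ≤ B + t.ncard * B := Nat.add_le_add h3 h2
    _ = (insert a t).ncard * B := by rw [h4]; ring

/-- components of `G − A` have small neighbourhoods
(Lemma `A-small-neighbourhoods`). -/
theorem comp_nbhd_small {V : Type*} [Fintype V] [DecidableEq V]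
    (G : SimpleGraph V) (hG : G.Connected) (k : ℕ) (hk : 0 < k) (S : Set V) :
    ∀ D : Set V, IsCompOf G (chipBag G k S) D →
      (setNbhd G D).ncard ≤ 3 * k * (3 * k * 4 ^ (3 * k) + 1) := by
  intro D hD
  obtain ⟨hDA, hDconn, hDmax⟩ := hD
  obtain ⟨⟨d, hd⟩⟩ := hDconn.nonempty
  have hdA : d ∉ chipBag G k S := hDA hd
  have hdI : d ∉ ⋂ C ∈ maximalChips G k S, (closedNbhd G C)ᶜ := fun h => hdA (Or.inl h)
  have hdU : ∀ C' ∈ maximalChips G k S, d ∉ setNbhd G C' := by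
    intro C' hC' h
    exact hdA (Or.inr (Set.mem_biUnion hC' h))
  obtain ⟨C, hC𝒞, hdC⟩ : ∃ C ∈ maximalChips G k S, d ∈ closedNbhd G C := by
    by_contra h
    push_neg at h
    exact hdI (Set.mem_iInter₂.2 fun C hC => h C hC)
  have hChip : IsChip G k S C := hC𝒞.1
  have hdCC : d ∈ C := by
    rcases hdC with h | h
    · exact h
    · exact absurd h (hdU C hC𝒞)
  -- the component is contained in the chip C
  have haux : ∀ x, Relation.ReflTransGen (chainRel G D) d x → x ∈ C := by
    intro x h
    induction h with
    | refl => exact hdCC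
    | @tail b c hch hstep ih =>
        by_contra hcC
        exact hDA hstep.2.1 (Or.inr (Set.mem_biUnion hC𝒞 ⟨hcC, b, ih, hstep.2.2⟩))
  have hDC : D ⊆ C := fun x hx => haux x (connected_chain hDconn hd hx)
  -- the neighbourhood of the component is inside the bag
  have hND_A : setNbhd G D ⊆ chipBag G k S := by
    intro b hb
    by_contra hbA
    obtain ⟨hbD, u, huD, hub⟩ := hb
    have hconn' := connected_insert hDconn huD hub
    have hsub' : insert b D ⊆ (chipBag G k S)ᶜ := by
      intro a ha
      rcases ha with rfl | ha
      · exact hbA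
      · exact hDA ha
    have heq := hDmax (insert b D) (Set.subset_insert b D) hsub' hconn'
    exact hbD (heq ▸ Set.mem_insert b D)
  -- main structural inclusion
  have key : setNbhd G D ⊆ setNbhd G C ∪
      ⋃ w ∈ setNbhd G C, ⋃ C' ∈ {C' ∈ maximalChips G k S | w ∈ C'}, setNbhd G C' := by
    intro bv hbv
    by_cases hbC : bv ∈ setNbhd G C
    · exact Or.inl hbC
    have hbvA : bv ∈ chipBag G k S := hND_A hbv
    obtain ⟨hbvD, u, huD, hadj⟩ := hbv
    have hbvC : bv ∈ C := by
      by_contra h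
      exact hbC ⟨h, u, hDC huD, hadj⟩
    have hbvU : bv ∈ ⋃ C' ∈ maximalChips G k S, setNbhd G C' := by
      rcases hbvA with h | h
      · exact absurd (Or.inl hbvC) (Set.mem_iInter₂.1 h C hC𝒞)
      · exact h
    simp only [Set.mem_iUnion, exists_prop] at hbvU
    obtain ⟨C'', hC''𝒞, hbvN⟩ := hbvU
    have hC''chip : IsChip G k S C'' := hC''𝒞.1
    obtain ⟨hbvC'', u', hu'C'', hadj'⟩ := hbvN
    have hW : (C'' ∩ setNbhd G C).Nonempty := by
      by_contra hem
      rw [Set.not_nonempty_iff_eq_empty] at hem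
      have hnem : ∀ a, a ∈ C'' → a ∉ setNbhd G C := by
        intro a ha h
        exact (Set.eq_empty_iff_forall_notMem.1 hem a) ⟨ha, h⟩
      have hu'C : u' ∈ C := by
        by_contra h
        exact hnem u' hu'C'' ⟨h, bv, hbvC, hadj'.symm⟩
      have haux2 : ∀ x, Relation.ReflTransGen (chainRel G C'') u' x → x ∈ C := by
        intro x h
        induction h with
        | refl => exact hu'C
        | @tail b c hch hstep ih =>
            by_contra hcC
            exact hnem c hstep.2.1 ⟨hcC, b, ih, hstep.2.2⟩
      have hC''sub : C'' ⊆ C :=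
        fun x hx => haux2 x (connected_chain hC''chip.1 hu'C'' hx)
      have hCeq : C = C'' := hC''𝒞.2 C hChip hC''sub
      exact hbvC'' (hCeq ▸ hbvC)
    obtain ⟨w, hwC'', hwNC⟩ := hW
    refine Or.inr (Set.mem_biUnion hwNC (Set.mem_biUnion ?_ ⟨hbvC'', u', hu'C'', hadj'⟩))
    exact ⟨hC''𝒞, hwC''⟩
  -- counting
  have hw_count : ∀ w : V, ({C' ∈ maximalChips G k S | w ∈ C'}).ncard ≤ 4 ^ (3 * k) := by
    intro w
    have hinj : Set.InjOn (fun C' => setNbhd G C') {C' ∈ maximalChips G k S | w ∈ C'} := by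
      rintro C₁ ⟨h₁, hw₁⟩ C₂ ⟨h₂, hw₂⟩ he
      have he' : setNbhd G C₁ = setNbhd G C₂ := he
      have e1 : reachSet G (setNbhd G C₁) {w} = C₁ := reach_chip_eq h₁.1.1 hw₁
      have e2 : reachSet G (setNbhd G C₂) {w} = C₂ := reach_chip_eq h₂.1.1 hw₂
      rw [← e1, ← e2, he']
    have himg : (fun C' => setNbhd G C') '' {C' ∈ maximalChips G k S | w ∈ C'} ⊆
        CNT G S {w} ∅ {w} (3 * k) := by
      rintro _ ⟨C', ⟨h𝒞, hwC'⟩, rfl⟩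
      exact chip_mem_CNT h𝒞.1 hwC'
    calc ({C' ∈ maximalChips G k S | w ∈ C'}).ncard
        = ((fun C' => setNbhd G C') '' {C' ∈ maximalChips G k S | w ∈ C'}).ncard :=
          (Set.ncard_image_of_injOn hinj).symm
      _ ≤ (CNT G S {w} ∅ {w} (3 * k)).ncard := Set.ncard_le_ncard himg (Set.toFinite _)
      _ ≤ 2 ^ (2 * (3 * k)) :=
          count_le (G := G) (Y := S) {w} (2 * (3 * k)) ∅ {w} (3 * k)
            (Set.Subset.refl _) (Nat.le_add_left _ _)
      _ = 4 ^ (3 * k) := by rw [show (4 : ℕ) = 2 ^ 2 from rfl, ← pow_mul]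
  have hinner : ∀ w : V, (⋃ C' ∈ {C' ∈ maximalChips G k S | w ∈ C'}, setNbhd G C').ncard ≤
      4 ^ (3 * k) * (3 * k) := by
    intro w
    calc (⋃ C' ∈ {C' ∈ maximalChips G k S | w ∈ C'}, setNbhd G C').ncard
        ≤ ({C' ∈ maximalChips G k S | w ∈ C'}).ncard * (3 * k) :=
          ncard_biUnion_le _ _ (Set.toFinite _) (fun C' hC' => hC'.1.1.2.1)
      _ ≤ 4 ^ (3 * k) * (3 * k) := Nat.mul_le_mul_right _ (hw_count w)
  have houter : (⋃ w ∈ setNbhd G C,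
      ⋃ C' ∈ {C' ∈ maximalChips G k S | w ∈ C'}, setNbhd G C').ncard ≤
      3 * k * (4 ^ (3 * k) * (3 * k)) := by
    calc (⋃ w ∈ setNbhd G C,
        ⋃ C' ∈ {C' ∈ maximalChips G k S | w ∈ C'}, setNbhd G C').ncard
        ≤ (setNbhd G C).ncard * (4 ^ (3 * k) * (3 * k)) :=
          ncard_biUnion_le _ _ (Set.toFinite _) (fun w _ => hinner w)
      _ ≤ 3 * k * (4 ^ (3 * k) * (3 * k)) :=
          Nat.mul_le_mul_right _ hChip.2.1
  calc (setNbhd G D).ncard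
      ≤ (setNbhd G C ∪ ⋃ w ∈ setNbhd G C,
          ⋃ C' ∈ {C' ∈ maximalChips G k S | w ∈ C'}, setNbhd G C').ncard :=
        Set.ncard_le_ncard key (Set.toFinite _)
    _ ≤ (setNbhd G C).ncard + (⋃ w ∈ setNbhd G C,
          ⋃ C' ∈ {C' ∈ maximalChips G k S | w ∈ C'}, setNbhd G C').ncard :=
        Set.ncard_union_le _ _
    _ ≤ 3 * k + 3 * k * (4 ^ (3 * k) * (3 * k)) := Nat.add_le_add hChip.2.1 houter
    _ = 3 * k * (3 * k * 4 ^ (3 * k) + 1) := by ring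
end

section
/- Let α ∈ (0,1) be a real number and let a₁, a₂, …, aₙ be real numbers with 0 ≤ aᵢ ≤ α for each i and ∑_{i=1}^{n} aᵢ = 1. Set ζ = 2⌈1/α⌉ − 1. Then there exists a function g : {1,…,n} → {1,…,ζ} such that for every j ∈ {1,…,ζ}, ∑_{i : g(i)=j} aᵢ ≤ α. -/
open SimpleGraph

variable {V : Type*}

/-- grouping numbers into `2⌈1/α⌉−1` groups of sum at most `α`
(Lemma 6.2). -/
theorem grouping {α : ℝ} (hα : α ∈ Set.Ioo (0 : ℝ) 1) (n : ℕ) (a : Fin n → ℝ)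
    (ha : ∀ i, a i ∈ Set.Icc (0 : ℝ) α) (hsum : ∑ i, a i = 1) :
    ∃ g : Fin n → Fin (2 * ⌈1 / α⌉₊ - 1),
      ∀ j, ∑ i ∈ Finset.univ.filter (fun i => g i = j), a i ≤ α := by
    classical
  obtain ⟨hα0, hα1⟩ := hα
  set m : ℕ := ⌈1 / α⌉₊ with hmdef
  have hm2 : 2 ≤ m := by
    have h1 : (1:ℝ) < 1 / α := by rw [lt_div_iff₀ hα0]; linarith
    have := Nat.lt_ceil.mpr (by exact_mod_cast h1 : ((1:ℕ):ℝ) < 1/α)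
    omega
  have hmα : (1:ℝ) ≤ (m:ℝ) * α := by
    have h := Nat.le_ceil (1 / α)
    have h2 : (1/α) * α ≤ (m:ℝ) * α := mul_le_mul_of_nonneg_right h hα0.le
    calc (1:ℝ) = (1/α) * α := by field_simp
    _ ≤ (m:ℝ) * α := h2
  -- extended sequence and prefix sums
  set b : ℕ → ℝ := fun t => if h : t < n then a ⟨t, h⟩ else 0 with hbdef
  have hb0 : ∀ t, 0 ≤ b t := by
    intro t; simp only [hbdef]
    split
    · exact (ha _).1
    · exact le_refl 0
  have hbval : ∀ i : Fin n, b i.1 = a i := by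
    intro i; simp [hbdef, i.2]
  set S : ℕ → ℝ := fun t => ∑ r ∈ Finset.range t, b r with hSdef
  have hS0 : ∀ t, 0 ≤ S t := fun t => Finset.sum_nonneg fun r _ => hb0 r
  have hSmono : Monotone S := fun s t hst =>
    Finset.sum_le_sum_of_subset_of_nonneg (Finset.range_subset_range.mpr hst)
      (fun r _ _ => hb0 r)
  have hSsucc : ∀ t, S (t+1) = S t + b t := fun t => Finset.sum_range_succ b t
  have hSn : S n = 1 := by
    show ∑ r ∈ Finset.range n, b r = 1
    rw [← Fin.sum_univ_eq_sum_range b n]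
    simp only [hbval]
    exact hsum
  have hS1 : ∀ t, S t ≤ 1 := by
    intro t
    rcases le_total t n with h | h
    · rw [← hSn]; exact hSmono h
    · have : S t = S n := by
        rw [hSdef]
        simp only [Finset.range_eq_Ico]
        rw [← Finset.sum_Ico_consecutive b (Nat.zero_le n) h]
        have : ∑ r ∈ Finset.Ico n t, b r = 0 := by
          apply Finset.sum_eq_zero
          intro r hr
          have := (Finset.mem_Ico.mp hr).1
          simp [hbdef, Nat.not_lt.mpr this]
        rw [this, add_zero]
      rw [this, hSn]
  -- bucket index
  set K : Fin n → ℕ := fun i => ⌊S i.1 / α⌋₊ with hKdef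
  have hKle : ∀ i : Fin n, (K i : ℝ) * α ≤ S i.1 := by
    intro i
    have := Nat.floor_le (div_nonneg (hS0 i.1) hα0.le)
    calc (K i : ℝ) * α ≤ (S i.1 / α) * α := mul_le_mul_of_nonneg_right this hα0.le
    _ = S i.1 := by field_simp
  have hKlt : ∀ i : Fin n, S i.1 < ((K i : ℝ) + 1) * α := by
    intro i
    have := Nat.lt_floor_add_one (S i.1 / α)
    calc S i.1 = (S i.1 / α) * α := by field_simp
    _ < ((K i : ℝ) + 1) * α := by
        apply mul_lt_mul_of_pos_right this hα0
  have hSa1 : ∀ i : Fin n, S i.1 + a i ≤ 1 := by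
    intro i
    rw [← hbval i, ← hSsucc i.1]
    exact hS1 _
  -- the grouping value
  set G : Fin n → ℕ := fun i =>
    if ((K i : ℝ) + 1) * α < S i.1 + a i then m + K i else min (K i) (m - 1)
    with hGdef
  have hGlt : ∀ i, G i < 2 * m - 1 := by
    intro i
    simp only [hGdef]
    split
    · rename_i hc
      have h1 : ((K i : ℝ) + 1) * α < (m:ℝ) * α := lt_of_lt_of_le (lt_of_lt_of_le hc (hSa1 i)) hmα
      have h2 : ((K i : ℝ) + 1) < (m:ℝ) := lt_of_mul_lt_mul_right h1 hα0.le
      have : K i + 1 < m := by exact_mod_cast h2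
      omega
    · have : min (K i) (m-1) ≤ m - 1 := min_le_right _ _
      omega
  refine ⟨fun i => ⟨G i, hGlt i⟩, ?_⟩
  intro j
  set F := Finset.univ.filter (fun i => (⟨G i, hGlt i⟩ : Fin (2*m-1)) = j) with hFdef
  have hFval : ∀ i ∈ F, G i = (j : ℕ) := by
    intro i hi
    have := (Finset.mem_filter.mp hi).2
    exact congrArg Fin.val this
  by_cases hj : (j : ℕ) < m
  · -- non-crossing group
    have hFmem : ∀ i ∈ F, ¬ (((K i : ℝ) + 1) * α < S i.1 + a i) ∧ min (K i) (m-1) = (j:ℕ) := by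
      intro i hi
      have hgv := hFval i hi
      by_cases hc : ((K i : ℝ) + 1) * α < S i.1 + a i
      · exfalso
        simp only [hGdef, if_pos hc] at hgv
        omega
      · simp only [hGdef, if_neg hc] at hgv
        exact ⟨hc, hgv⟩
    set F' := F.filter (fun i => 0 < a i) with hF'def
    have hsum_eq : ∑ i ∈ F', a i = ∑ i ∈ F, a i := by
      apply Finset.sum_subset (Finset.filter_subset _ _)
      intro i hiF hiF'
      have h1 : ¬ (0 < a i) := by
        intro h
        exact hiF' (Finset.mem_filter.mpr ⟨hiF, h⟩)
      exact le_antisymm (not_lt.mp h1) (ha i).1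
    have hKj : ∀ i ∈ F', K i = (j:ℕ) := by
      intro i hi
      have hiF := Finset.filter_subset _ _ hi
      have hpos : 0 < a i := (Finset.mem_filter.mp hi).2
      obtain ⟨hnc, hmin⟩ := hFmem i hiF
      have hk : K i ≤ m - 1 := by
        by_contra hk
        push_neg at hk
        have : m ≤ K i := by omega
        have h1 : (m:ℝ) * α ≤ (K i : ℝ) * α := by
          apply mul_le_mul_of_nonneg_right _ hα0.le
          exact_mod_cast this
        have h2 : (1:ℝ) ≤ S i.1 := le_trans hmα (le_trans h1 (hKle i))
        have := hSa1 i
        linarith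
      rw [min_eq_left hk] at hmin
      exact hmin
    have hbound : ∀ i ∈ F', ((j:ℕ):ℝ) * α ≤ S i.1 ∧ S i.1 + a i ≤ (((j:ℕ):ℝ) + 1) * α := by
      intro i hi
      have hk := hKj i hi
      have hiF := Finset.filter_subset _ _ hi
      obtain ⟨hnc, _⟩ := hFmem i hiF
      constructor
      · have := hKle i; rw [hk] at this; exact_mod_cast this
      · have := not_lt.mp hnc; rw [hk] at this; exact_mod_cast this
    rcases F'.eq_empty_or_nonempty with hFe | hFne
    · rw [← hsum_eq, hFe]
      simp [hα0.le]
    · set i₀ := F'.min' hFne with hi₀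
      set i₁ := F'.max' hFne with hi₁
      have hi₀mem : i₀ ∈ F' := F'.min'_mem hFne
      have hi₁mem : i₁ ∈ F' := F'.max'_mem hFne
      have step1 : ∑ i ∈ F', a i ≤ S (i₁.1 + 1) - S i₀.1 := by
        have himg : ∑ i ∈ F', a i = ∑ r ∈ F'.image Fin.val, b r := by
          rw [Finset.sum_image (fun x _ y _ h => Fin.val_injective h)]
          exact (Finset.sum_congr rfl fun i _ => (hbval i)).symm
        rw [himg]
        have hsub : F'.image Fin.val ⊆ Finset.Ico i₀.1 (i₁.1 + 1) := by
          intro r hr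
          obtain ⟨i, hi, rfl⟩ := Finset.mem_image.mp hr
          rw [Finset.mem_Ico]
          exact ⟨F'.min'_le i hi, Nat.lt_succ_of_le (F'.le_max' i hi)⟩
        have h1 : ∑ r ∈ F'.image Fin.val, b r ≤ ∑ r ∈ Finset.Ico i₀.1 (i₁.1+1), b r :=
          Finset.sum_le_sum_of_subset_of_nonneg hsub (fun r _ _ => hb0 r)
        have h2 : ∑ r ∈ Finset.Ico i₀.1 (i₁.1+1), b r = S (i₁.1+1) - S i₀.1 := by
          rw [Finset.sum_Ico_eq_sub b (Nat.le_succ_of_le (F'.min'_le i₁ hi₁mem))]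
        linarith
      have h3 : S (i₁.1+1) = S i₁.1 + a i₁ := by rw [hSsucc, hbval]
      obtain ⟨hl0, _⟩ := hbound i₀ hi₀mem
      obtain ⟨_, hh1⟩ := hbound i₁ hi₁mem
      rw [← hsum_eq]
      rw [h3] at step1
      calc ∑ i ∈ F', a i ≤ (S i₁.1 + a i₁) - S i₀.1 := step1
      _ ≤ (((j:ℕ):ℝ) + 1) * α - ((j:ℕ):ℝ) * α := by linarith
      _ = α := by ring
  · -- crossing group: at most one element
    push_neg at hj
    have hFmem : ∀ i ∈ F, ((K i : ℝ) + 1) * α < S i.1 + a i ∧ m + K i = (j:ℕ) := by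
      intro i hi
      have hgv := hFval i hi
      by_cases hc : ((K i : ℝ) + 1) * α < S i.1 + a i
      · simp only [hGdef, if_pos hc] at hgv
        exact ⟨hc, hgv⟩
      · exfalso
        simp only [hGdef, if_neg hc] at hgv
        have : min (K i) (m-1) ≤ m - 1 := min_le_right _ _
        omega
    have huniq : ∀ i ∈ F, ∀ i' ∈ F, i = i' := by
      intro i hi i' hi'
      obtain ⟨hc, hk⟩ := hFmem i hi
      obtain ⟨hc', hk'⟩ := hFmem i' hi'
      have hKK : K i = K i' := by omega
      by_contra hne
      have hlt : i.1 < i'.1 ∨ i'.1 < i.1 := by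
        rcases Nat.lt_trichotomy i.1 i'.1 with h | h | h
        · exact Or.inl h
        · exact absurd (Fin.val_injective h) hne
        · exact Or.inr h
      rcases hlt with h | h
      · have h1 : S i.1 + a i ≤ S i'.1 := by
          rw [← hbval i, ← hSsucc]
          exact hSmono h
        have := hKlt i'
        rw [← hKK] at this
        linarith
      · have h1 : S i'.1 + a i' ≤ S i.1 := by
          rw [← hbval i', ← hSsucc]
          exact hSmono h
        have := hKlt i
        rw [hKK] at this
        linarith
    rcases F.eq_empty_or_nonempty with hFe | ⟨i, hi⟩
    · rw [hFe]; simp [hα0.le]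
    · have : F = {i} := by
        apply Finset.eq_singleton_iff_unique_mem.mpr
        exact ⟨hi, fun x hx => huniq x hx i hi⟩
      rw [this, Finset.sum_singleton]
      exact (ha i).2
end

section
/- Let G be a finite simple graph, k a nonnegative integer, A ⊆ V(G), and let v_a, v_b ∈ A be two distinct vertices. Suppose there are more than k distinct connected components D of G − A such that v_a ∈ N_G(V(D)) and v_b ∈ N_G(V(D)). Then for every set Z ⊆ V(G) ∖ {v_a, v_b} with |Z| ≤ k, the vertices v_a and v_b lie in the same connected component of G − Z. -/
open SimpleGraph

variable {V : Type*}

private lemma reach_mono' (G : SimpleGraph V) {s t : Set V} (h : s ⊆ t) {a b : s}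
    (hr : (G.induce s).Reachable a b) :
    (G.induce t).Reachable ⟨a.1, h a.2⟩ ⟨b.1, h b.2⟩ :=
  hr.map (⟨fun x => ⟨x.1, h x.2⟩, fun had => had⟩ : G.induce s →g G.induce t)

private lemma comp_disjoint {G : SimpleGraph V} {A D1 D2 : Set V}
    (h1 : IsCompOf G A D1) (h2 : IsCompOf G A D2) (hne : (D1 ∩ D2).Nonempty) :
    D1 = D2 := by
  obtain ⟨x, hx1, hx2⟩ := hne
  have hconn : (G.induce (D1 ∪ D2)).Connected := by
    haveI : Nonempty (D1 ∪ D2 : Set V) := ⟨⟨x, Or.inl hx1⟩⟩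
    refine ⟨fun a b => ?_⟩
    have key : ∀ c : (D1 ∪ D2 : Set V),
        (G.induce (D1 ∪ D2)).Reachable c ⟨x, Or.inl hx1⟩ := by
      rintro ⟨c, hc | hc⟩
      · exact reach_mono' G Set.subset_union_left
          (h1.2.1.preconnected ⟨c, hc⟩ ⟨x, hx1⟩)
      · exact reach_mono' G Set.subset_union_right
          (h2.2.1.preconnected ⟨c, hc⟩ ⟨x, hx2⟩)
    exact (key a).trans (key b).symm
  have e1 := h1.2.2 (D1 ∪ D2) Set.subset_union_left
    (Set.union_subset h1.1 h2.1) hconn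
  have e2 := h2.2.2 (D1 ∪ D2) Set.subset_union_right
    (Set.union_subset h1.1 h2.1) hconn
  exact e1.symm.trans e2

/-- two vertices adjacent to more than `k` common components of
`G − A` cannot be separated by removing at most `k` other vertices. -/
theorem many_common_components_inseparable {V : Type*} [Fintype V]
    [DecidableEq V] (G : SimpleGraph V) (k : ℕ) (A : Set V) (va vb : V)
    (hva : va ∈ A) (hvb : vb ∈ A) (hab : va ≠ vb)
    (hmany : k <
      {D : Set V | IsCompOf G A D ∧ va ∈ setNbhd G D ∧ vb ∈ setNbhd G D}.ncard) :
    ∀ Z : Set V, Z ⊆ ({va, vb} : Set V)ᶜ → Z.ncard ≤ k →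
      ReachAvoid G Z va vb := by
  classical
  intro Z hZsub hZcard
  set S := {D : Set V | IsCompOf G A D ∧ va ∈ setNbhd G D ∧ vb ∈ setNbhd G D}
  -- find D ∈ S disjoint from Z
  have hex : ∃ D ∈ S, D ∩ Z = ∅ := by
    by_contra hcon
    push_neg at hcon
    have hne : ∀ D ∈ S, (D ∩ Z).Nonempty := hcon
    set f : Set V → V := fun D => if h : (D ∩ Z).Nonempty then h.choose else va
    have hf : ∀ D ∈ S, f D ∈ D ∩ Z := by
      intro D hD
      have h := hne D hD
      simp only [f, dif_pos h]
      exact h.choose_spec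
    have hle : S.ncard ≤ Z.ncard := by
      apply Set.ncard_le_ncard_of_injOn f (fun D hD => (hf D hD).2) ?_ Z.toFinite
      intro D1 h1 D2 h2 hfe
      exact comp_disjoint h1.1 h2.1 ⟨f D1, (hf D1 h1).1, hfe ▸ (hf D2 h2).1⟩
    omega
  obtain ⟨D, hD, hdisj⟩ := hex
  obtain ⟨hcomp, ⟨hvaD, u, huD, hadju⟩, hvbD, w, hwD, hadjw⟩ := hD
  have hDZ : D ⊆ Zᶜ := fun x hx hxZ =>
    (Set.eq_empty_iff_forall_notMem.mp hdisj x) ⟨hx, hxZ⟩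
  have hvaZ : va ∈ Zᶜ := fun h => hZsub h (Or.inl rfl)
  have hvbZ : vb ∈ Zᶜ := fun h => hZsub h (Or.inr rfl)
  refine ⟨hvaZ, hvbZ, ?_⟩
  have hru : (G.induce Zᶜ).Reachable ⟨u, hDZ huD⟩ ⟨w, hDZ hwD⟩ :=
    reach_mono' G hDZ (hcomp.2.1.preconnected ⟨u, huD⟩ ⟨w, hwD⟩)
  have h1 : (G.induce Zᶜ).Adj ⟨va, hvaZ⟩ ⟨u, hDZ huD⟩ := hadju.symm
  have h2 : (G.induce Zᶜ).Adj ⟨w, hDZ hwD⟩ ⟨vb, hvbZ⟩ := hadjw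
  exact (h1.reachable.trans hru).trans h2.reachable
end
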